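/- Let η be a real random variable with finite even moments μ_{2k} = E[η^{2k}] for k = 0,1,…,m (μ_0 = 1), let α ≥ 0 and β ≥ 0, and let A(η) = (η², 1)'(α, β) be the 2×2 rank-one GARCH(1,1) companion matrix. Then the 2^m × 2^m matrix E[A(η)^{⊗m}] has at most one nonzero eigenvalue: its spectrum is contained in {0, S} with S = Σ_{k=0}^m binom(m,k) α^k β^{m−k} μ_{2k}, S is an eigenvalue whenever S ≠ 0, and the spectral radius of E[A(η)^{⊗m}] equals S. -/

import Mathlib

open MeasureTheory

/-- Entrywise description of the `m`-fold Kronecker power (indexed by `Fin m → I`). -/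
def kronPow {I J : Type*} [Fintype I] [Fintype J] (A : Matrix I J ℝ) (m : ℕ) :
    Matrix (Fin m → I) (Fin m → J) ℝ :=
  Matrix.of fun i j => ∏ t : Fin m, A (i t) (j t)

section RankOneAux

open Polynomial Matrix

variable {ι : Type*} [Fintype ι] [DecidableEq ι] [Nonempty ι]

private lemma vecMulVec_mul_self' (w v : ι → ℝ) :
    Matrix.vecMulVec w v * Matrix.vecMulVec w v =
      (v ⬝ᵥ w) • Matrix.vecMulVec w v := by
  ext i j
  simp only [Matrix.mul_apply, Matrix.vecMulVec_apply, Matrix.smul_apply,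
    dotProduct, smul_eq_mul]
  rw [Finset.sum_mul]
  exact Finset.sum_congr rfl fun k _ => by ring

private lemma vecMulVec_mulVec_self' (w v : ι → ℝ) :
    Matrix.vecMulVec w v *ᵥ w = (v ⬝ᵥ w) • w := by
  funext i
  simp only [Matrix.mulVec, dotProduct, Matrix.vecMulVec_apply, Pi.smul_apply,
    smul_eq_mul]
  rw [Finset.sum_mul]
  exact Finset.sum_congr rfl fun k _ => by ring

private lemma spectrum_vecMulVec_subset' (w v : ι → ℝ) :
    spectrum ℝ (Matrix.vecMulVec w v) ⊆ {0, v ⬝ᵥ w} := by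
  intro x hx
  set N := Matrix.vecMulVec w v with hN
  have h0 : Polynomial.aeval N (X ^ 2 - C (v ⬝ᵥ w) * X) = 0 := by
    simp only [map_sub, _root_.map_mul, map_pow, aeval_X, aeval_C]
    rw [sq, hN, vecMulVec_mul_self', Algebra.algebraMap_eq_smul_one, smul_mul_assoc,
      one_mul, sub_self]
  have hmem := spectrum.subset_polynomial_aeval N (X ^ 2 - C (v ⬝ᵥ w) * X)
    ⟨x, hx, rfl⟩
  rw [h0, spectrum.zero_eq] at hmem
  simp only [eval_sub, eval_mul, eval_pow, eval_X, eval_C, Set.mem_singleton_iff] at hmem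
  have hz : x * (x - v ⬝ᵥ w) = 0 := by linear_combination hmem
  rcases mul_eq_zero.mp hz with h | h
  · exact Set.mem_insert_iff.mpr (Or.inl h)
  · exact Set.mem_insert_iff.mpr (Or.inr (sub_eq_zero.mp h))

private lemma mem_spectrum_vecMulVec' (w v : ι → ℝ) (h : v ⬝ᵥ w ≠ 0) :
    v ⬝ᵥ w ∈ spectrum ℝ (Matrix.vecMulVec w v) := by
  rw [spectrum.mem_iff]
  intro hunit
  have hw : w ≠ 0 := by
    rintro rfl
    exact h (by simp [dotProduct])
  obtain ⟨B, hB⟩ := hunit.exists_left_inv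
  have key : ((algebraMap ℝ (Matrix ι ι ℝ)) (v ⬝ᵥ w) - Matrix.vecMulVec w v) *ᵥ w = 0 := by
    rw [Matrix.sub_mulVec, vecMulVec_mulVec_self', Algebra.algebraMap_eq_smul_one,
      Matrix.smul_mulVec, Matrix.one_mulVec, sub_self]
  have h2 : B *ᵥ ((algebraMap ℝ (Matrix ι ι ℝ)) (v ⬝ᵥ w) - Matrix.vecMulVec w v) *ᵥ w = w := by
    rw [Matrix.mulVec_mulVec, hB, Matrix.one_mulVec]
  rw [key, Matrix.mulVec_zero] at h2
  exact hw h2.symm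

private lemma spectralRadius_of_subset' {A : Type*} [Ring A] [Algebra ℝ A] (a : A) (S : ℝ)
    (hS : 0 ≤ S) (h1 : spectrum ℝ a ⊆ {0, S}) (h2 : S ≠ 0 → S ∈ spectrum ℝ a) :
    spectralRadius ℝ a = ENNReal.ofReal S := by
  rcases eq_or_ne S 0 with rfl | hne
  · rw [ENNReal.ofReal_zero]
    refine le_antisymm (iSup₂_le fun k hk => ?_) zero_le
    rcases h1 hk with rfl | h
    · simp
    · simp only [Set.mem_singleton_iff] at h; subst h; simp
  · refine le_antisymm (iSup₂_le fun k hk => ?_) ?_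
    · rcases h1 hk with rfl | h
      · simp
      · simp only [Set.mem_singleton_iff] at h; subst h
        exact (Real.enorm_eq_ofReal hS).le
    · have := le_iSup₂ (f := fun (k : ℝ) (_ : k ∈ spectrum ℝ a) => (‖k‖₊ : ENNReal)) S (h2 hne)
      exact (Real.enorm_eq_ofReal hS).symm.le.trans this

private lemma sum_prod_eq_pow' (n : ℕ) (g : Fin 2 → ℝ) :
    ∑ j : Fin n → Fin 2, ∏ t, g (j t) = (∑ x, g x) ^ n := by
  rw [← Fintype.piFinset_univ,
    Finset.sum_prod_piFinset Finset.univ (fun (_ : Fin n) (x : Fin 2) => g x),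
    Finset.prod_const, Finset.card_univ, Fintype.card_fin]

end RankOneAux

/-- **The single nonzero eigenvalue of the expected Kronecker power of the
GARCH(1,1) companion matrix.**
Let `η` have finite even moments `μ_{2k} = E[η^{2k}]`, `k = 0,…,m`, let `α, β ≥ 0`,
and let `A(η) = (η², 1)'(α, β)`.  Then the `2^m × 2^m` matrix `E[A(η)^{⊗m}]` has
spectrum contained in `{0, S}` with
`S = Σ_{k=0}^m C(m,k) α^k β^{m−k} μ_{2k}`; `S` is an eigenvalue whenever `S ≠ 0`,
and the spectral radius of `E[A(η)^{⊗m}]` equals `S`. -/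
theorem stmt_6 {Ω : Type*} [MeasurableSpace Ω] (μ : Measure Ω) [IsProbabilityMeasure μ]
    (m : ℕ) (hm : 1 ≤ m) (η : Ω → ℝ) (hηmeas : Measurable η)
    (hmom : ∀ k ≤ m, Integrable (fun ω => η ω ^ (2 * k)) μ)
    (α β : ℝ) (hα : 0 ≤ α) (hβ : 0 ≤ β) :
    spectrum ℝ
        (Matrix.of fun i j =>
          ∫ ω, kronPow (Matrix.vecMulVec ![η ω ^ 2, 1] ![α, β]) m i j ∂μ) ⊆
      {0, ∑ k ∈ Finset.range (m + 1),
        (m.choose k : ℝ) * α ^ k * β ^ (m - k) * ∫ ω, η ω ^ (2 * k) ∂μ} ∧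
    ((∑ k ∈ Finset.range (m + 1),
        (m.choose k : ℝ) * α ^ k * β ^ (m - k) * ∫ ω, η ω ^ (2 * k) ∂μ) ≠ 0 →
      (∑ k ∈ Finset.range (m + 1),
        (m.choose k : ℝ) * α ^ k * β ^ (m - k) * ∫ ω, η ω ^ (2 * k) ∂μ) ∈
        spectrum ℝ
          (Matrix.of fun i j =>
            ∫ ω, kronPow (Matrix.vecMulVec ![η ω ^ 2, 1] ![α, β]) m i j ∂μ)) ∧
    spectralRadius ℝ
        (Matrix.of fun i j =>
          ∫ ω, kronPow (Matrix.vecMulVec ![η ω ^ 2, 1] ![α, β]) m i j ∂μ) =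
      ENNReal.ofReal (∑ k ∈ Finset.range (m + 1),
        (m.choose k : ℝ) * α ^ k * β ^ (m - k) * ∫ ω, η ω ^ (2 * k) ∂μ) := by
  haveI : Nonempty (Fin m) := ⟨⟨0, hm⟩⟩
  have hsplit : ∀ (i : Fin m → Fin 2) (ω : Ω),
      (∏ t, (![η ω ^ 2, 1] : Fin 2 → ℝ) (i t)) =
        η ω ^ (2 * (Finset.univ.filter fun t => i t = 0).card) := by
    intro i ω
    have h2 : ∀ t : Fin m, (![η ω ^ 2, 1] : Fin 2 → ℝ) (i t) =
        if i t = 0 then η ω ^ 2 else 1 := by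
      intro t
      have h : i t = 0 ∨ i t = 1 := by omega
      rcases h with h | h <;> simp [h]
    rw [Finset.prod_congr rfl fun t _ => h2 t, Finset.prod_ite, Finset.prod_const,
      Finset.prod_const, one_pow, mul_one, ← pow_mul]
  have hint : ∀ i : Fin m → Fin 2,
      Integrable (fun ω => ∏ t, (![η ω ^ 2, 1] : Fin 2 → ℝ) (i t)) μ := by
    intro i
    have hcard : (Finset.univ.filter fun t => i t = 0).card ≤ m :=
      le_trans (Finset.card_filter_le _ _) (by simp)
    simpa only [hsplit i] using hmom _ hcard
  have hM : (Matrix.of fun i j =>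
        ∫ ω, kronPow (Matrix.vecMulVec ![η ω ^ 2, 1] ![α, β]) m i j ∂μ) =
      Matrix.vecMulVec (fun i : Fin m → Fin 2 => ∫ ω, ∏ t, (![η ω ^ 2, 1] : Fin 2 → ℝ) (i t) ∂μ)
        (fun j => ∏ t, (![α, β] : Fin 2 → ℝ) (j t)) := by
    ext i j
    simp only [Matrix.of_apply, kronPow, Matrix.vecMulVec_apply]
    have h3 : ∀ ω : Ω, (∏ t, (![η ω ^ 2, 1] : Fin 2 → ℝ) (i t) *
          (![α, β] : Fin 2 → ℝ) (j t)) =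
        (∏ t, (![η ω ^ 2, 1] : Fin 2 → ℝ) (i t)) * ∏ t, (![α, β] : Fin 2 → ℝ) (j t) :=
      fun ω => Finset.prod_mul_distrib
    simp only [h3]
    rw [MeasureTheory.integral_mul_const]
  have hL : dotProduct (fun j : Fin m → Fin 2 => ∏ t, (![α, β] : Fin 2 → ℝ) (j t))
        (fun i : Fin m → Fin 2 => ∫ ω, ∏ t, (![η ω ^ 2, 1] : Fin 2 → ℝ) (i t) ∂μ) =
      ∫ ω, (α * η ω ^ 2 + β * 1) ^ m ∂μ := by
    rw [dotProduct]
    have h1 : ∀ j : Fin m → Fin 2,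
        (∏ t, (![α, β] : Fin 2 → ℝ) (j t)) *
            ∫ ω, ∏ t, (![η ω ^ 2, 1] : Fin 2 → ℝ) (j t) ∂μ =
          ∫ ω, (∏ t, (![α, β] : Fin 2 → ℝ) (j t)) *
            ∏ t, (![η ω ^ 2, 1] : Fin 2 → ℝ) (j t) ∂μ :=
      fun j => (integral_const_mul _ _).symm
    rw [Finset.sum_congr rfl fun j _ => h1 j,
      ← integral_finset_sum _ (fun j _ => (hint j).const_mul _)]
    congr 1
    funext ω
    have h2 : ∀ j : Fin m → Fin 2,
        (∏ t, (![α, β] : Fin 2 → ℝ) (j t)) * ∏ t, (![η ω ^ 2, 1] : Fin 2 → ℝ) (j t) =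
          ∏ t, (![α, β] : Fin 2 → ℝ) (j t) * (![η ω ^ 2, 1] : Fin 2 → ℝ) (j t) :=
      fun j => Finset.prod_mul_distrib.symm
    rw [Finset.sum_congr rfl fun j _ => h2 j]
    rw [sum_prod_eq_pow' m
      (fun x => (![α, β] : Fin 2 → ℝ) x * (![η ω ^ 2, 1] : Fin 2 → ℝ) x),
      Fin.sum_univ_two]
    simp
  have hR : (∑ k ∈ Finset.range (m + 1),
        (m.choose k : ℝ) * α ^ k * β ^ (m - k) * ∫ ω, η ω ^ (2 * k) ∂μ) =
      ∫ ω, (α * η ω ^ 2 + β * 1) ^ m ∂μ := by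
    have h1 : ∀ k ∈ Finset.range (m + 1),
        (m.choose k : ℝ) * α ^ k * β ^ (m - k) * ∫ ω, η ω ^ (2 * k) ∂μ =
          ∫ ω, (m.choose k : ℝ) * α ^ k * β ^ (m - k) * η ω ^ (2 * k) ∂μ :=
      fun k _ => (integral_const_mul _ _).symm
    rw [Finset.sum_congr rfl h1, ← integral_finset_sum]
    · congr 1
      funext ω
      rw [add_pow]
      refine Finset.sum_congr rfl fun k hk => ?_
      rw [pow_mul]
      ring
    · intro k hk
      exact (hmom k (Nat.lt_succ_iff.mp (Finset.mem_range.mp hk))).const_mul _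
  have hS : dotProduct (fun j : Fin m → Fin 2 => ∏ t, (![α, β] : Fin 2 → ℝ) (j t))
        (fun i : Fin m → Fin 2 => ∫ ω, ∏ t, (![η ω ^ 2, 1] : Fin 2 → ℝ) (i t) ∂μ) =
      ∑ k ∈ Finset.range (m + 1),
        (m.choose k : ℝ) * α ^ k * β ^ (m - k) * ∫ ω, η ω ^ (2 * k) ∂μ :=
    hL.trans hR.symm
  have hSnonneg : 0 ≤ ∑ k ∈ Finset.range (m + 1),
      (m.choose k : ℝ) * α ^ k * β ^ (m - k) * ∫ ω, η ω ^ (2 * k) ∂μ :=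
    Finset.sum_nonneg fun k _ =>
      mul_nonneg
        (mul_nonneg (mul_nonneg (Nat.cast_nonneg _) (pow_nonneg hα k)) (pow_nonneg hβ _))
        (integral_nonneg fun ω => by rw [pow_mul]; exact pow_nonneg (sq_nonneg _) _)
  rw [hM]
  refine ⟨?_, ?_, ?_⟩
  · rw [← hS]
    exact spectrum_vecMulVec_subset' _ _
  · intro hne
    rw [← hS] at hne ⊢
    exact mem_spectrum_vecMulVec' _ _ hne
  · refine spectralRadius_of_subset' _ _ hSnonneg ?_ ?_
    · rw [← hS]
      exact spectrum_vecMulVec_subset' _ _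
    · intro hne
      rw [← hS] at hne ⊢
      exact mem_spectrum_vecMulVec' _ _ hne
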